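/- Let G be a finite multiset of Pauli strings and P a Pauli string. Let c be the number of Q ∈ G (with multiplicity) such that |conf(P,Q)| is odd. Then (|G| - Z_G(P)) / 2 = c, where Z_G(P) = Σ_{A ⊆ supp(P)} (-2)^|A| · |{Q ∈ G : A ⊆ conf(P,Q)}|. -/

import Mathlib

inductive Pauli | I | X | Y | Z
deriving DecidableEq

instance : Fintype Pauli where
  elems := {Pauli.I, Pauli.X, Pauli.Y, Pauli.Z}
  complete := by intro x; cases x <;> simp

def psupp {n : ℕ} (P : Fin n → Pauli) : Finset (Fin n) :=
  Finset.univ.filter fun j => P j ≠ Pauli.I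

def conf {n : ℕ} (P Q : Fin n → Pauli) : Finset (Fin n) :=
  Finset.univ.filter fun j => P j ≠ Pauli.I ∧ Q j ≠ Pauli.I ∧ P j ≠ Q j

lemma pow_sum_powerset {α : Type*} [DecidableEq α] (s : Finset α) (x : ℤ) :
    ∑ A ∈ s.powerset, x ^ A.card = (x + 1) ^ s.card := by
  rw [Finset.sum_powerset, add_pow]
  refine Finset.sum_congr rfl fun k hk => ?_
  rw [Finset.sum_congr rfl (fun A hA => by rw [(Finset.mem_powersetCard.1 hA).2]),
    Finset.sum_const, Finset.card_powersetCard, nsmul_eq_mul, one_pow, mul_one]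
  ring

lemma conf_subset {n : ℕ} (P Q : Fin n → Pauli) : conf P Q ⊆ psupp P := by
  intro j hj
  simp only [conf, psupp, Finset.mem_filter, Finset.mem_univ, true_and] at *
  exact hj.1

lemma single_sum {n : ℕ} (P Q : Fin n → Pauli) :
    ∑ A ∈ (psupp P).powerset, (-2 : ℤ) ^ A.card * (if A ⊆ conf P Q then 1 else 0)
      = (-1 : ℤ) ^ (conf P Q).card := by
  simp_rw [mul_ite, mul_one, mul_zero]
  rw [← Finset.sum_filter]
  have h : (psupp P).powerset.filter (fun A => A ⊆ conf P Q) = (conf P Q).powerset := by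
    ext A
    simp only [Finset.mem_filter, Finset.mem_powerset]
    exact ⟨fun h => h.2, fun h => ⟨h.trans (conf_subset P Q), h⟩⟩
  rw [h]
  simpa using pow_sum_powerset (conf P Q) (-2)

lemma key {n : ℕ} (G : Multiset (Fin n → Pauli)) (P : Fin n → Pauli) :
    ∑ A ∈ (psupp P).powerset,
        (-2 : ℤ) ^ A.card * ((G.filter fun Q => A ⊆ conf P Q).card : ℤ)
      = (G.card : ℤ) - 2 * ((G.filter fun Q => Odd (conf P Q).card).card : ℤ) := by
  induction G using Multiset.induction_on with
  | empty => simp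
  | cons a G ih =>
    have h1 : ∀ A : Finset (Fin n),
        ((((a ::ₘ G).filter fun Q => A ⊆ conf P Q).card : ℤ))
          = (if A ⊆ conf P a then 1 else 0) + ((G.filter fun Q => A ⊆ conf P Q).card : ℤ) := by
      intro A
      rw [Multiset.filter_cons]
      split <;> simp [add_comm]
    simp only [h1, mul_add, Finset.sum_add_distrib, single_sum, ih]
    rw [Multiset.filter_cons]
    split
    · rename_i ho
      rw [Odd.neg_one_pow ho]
      simp; push_cast; ring
    · rename_i ho
      rw [Even.neg_one_pow (Nat.not_odd_iff_even.1 ho)]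
      simp; push_cast; ring

theorem anti_count_formula {n : ℕ} (G : Multiset (Fin n → Pauli)) (P : Fin n → Pauli) :
    ((G.card : ℤ) -
        ∑ A ∈ (psupp P).powerset,
          (-2 : ℤ) ^ A.card * ((G.filter fun Q => A ⊆ conf P Q).card : ℤ)) / 2
      = ((G.filter fun Q => Odd (conf P Q).card).card : ℤ) := by
  rw [key]
  rw [show (G.card : ℤ) - ((G.card : ℤ) - 2 * _) = 2 * ((G.filter fun Q => Odd (conf P Q).card).card : ℤ) by ring]
  exact Int.mul_ediv_cancel_left _ two_ne_zero
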